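/- Let X and Y be P-spaces and suppose that every point of X has a well-orderable base of neighborhoods, i.e., for every x ∈ X there is a neighborhood basis of x indexed by a well-ordered set. Then the product X × Y is a P-space. In particular, if X is a first-countable P-space and Y is a P-space, then X × Y is a P-space. -/
import Mathlib


open Set Filter

universe u

/-- `X` is a P-space: every countable intersection of open sets is open. -/
def IsPSpace (X : Type*) [TopologicalSpace X] : Prop :=
  ∀ F : Set (Set X), F.Countable → (∀ U ∈ F, IsOpen U) → IsOpen (⋂₀ F)

/-- Every point of `X` has a neighborhood basis indexed by a well-ordered set. -/
def WellOrderableNhdsBases (X : Type u) [TopologicalSpace X] : Prop :=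
  ∀ x : X, ∃ (ι : Type u) (r : ι → ι → Prop) (_ : IsWellOrder ι r) (W : ι → Set X),
    (∀ i : ι, W i ∈ nhds x) ∧ ∀ V ∈ nhds x, ∃ i : ι, W i ⊆ V

lemma pspace_nhds {X : Type*} [TopologicalSpace X] (hX : IsPSpace X) (x : X)
    {ι : Type*} [Countable ι] (s : ι → Set X) (hs : ∀ i, s i ∈ nhds x) :
    (⋂ i, s i) ∈ nhds x := by
  choose U hU hUo hxU using fun i => mem_nhds_iff.mp (hs i)
  have hopen : IsOpen (⋂ i, U i) := by
    have := hX (range U) (countable_range U) (by rintro _ ⟨i, rfl⟩; exact hUo i)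
    rwa [sInter_range] at this
  exact mem_nhds_iff.mpr ⟨⋂ i, U i, iInter_mono hU, hopen, mem_iInter.mpr hxU⟩

lemma prod_pspace {X Y : Type*} [TopologicalSpace X] [TopologicalSpace Y]
    (hX : IsPSpace X) (hY : IsPSpace Y) : IsPSpace (X × Y) := by
  intro F hF hFo
  rw [isOpen_iff_mem_nhds]
  rintro ⟨x, y⟩ hp
  have := hF.to_subtype
  have key : ∀ U : F, (U : Set (X × Y)) ∈ nhds (x, y) :=
    fun U => (hFo U U.2).mem_nhds (hp U U.2)
  choose A hA B hB hAB using fun U : F => mem_prod_iff.mp (by rw [nhds_prod_eq] at key; exact key U)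
  have hmem : (⋂ U, A U) ×ˢ (⋂ U, B U) ∈ nhds (x, y) := by
    rw [nhds_prod_eq]
    exact prod_mem_prod (pspace_nhds hX x A hA) (pspace_nhds hY y B hB)
  refine Filter.mem_of_superset hmem ?_
  rintro ⟨a, b⟩ ⟨ha, hb⟩ V hV
  exact hAB ⟨V, hV⟩ ⟨mem_iInter.mp ha ⟨V, hV⟩, mem_iInter.mp hb ⟨V, hV⟩⟩

theorem stmt19 :
    (∀ (X Y : Type u) [TopologicalSpace X] [TopologicalSpace Y],
      IsPSpace X → IsPSpace Y → WellOrderableNhdsBases X → IsPSpace (X × Y)) ∧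
    (∀ (X Y : Type u) [TopologicalSpace X] [TopologicalSpace Y],
      FirstCountableTopology X → IsPSpace X → IsPSpace Y → IsPSpace (X × Y)) := by
  exact ⟨fun X Y _ _ hX hY _ => prod_pspace hX hY,
    fun X Y _ _ _ hX hY => prod_pspace hX hY⟩
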